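/- Let n ≥ 3 be an integer and assume that E[ε_u^m] = (m−1)·E[ε_u^{m−2}]·E[ε_u²] holds for every integer m with 3 ≤ m < n. Then E[Z^{n−1}·D] − (n−1)·E[D·Z]·E[Z^{n−2}] = α_z^{n−1}·α_d·( E[ε_u^n] − (n−1)·E[ε_u^{n−2}]·E[ε_u²] ). -/

import Mathlib

open MeasureTheory ProbabilityTheory
open scoped ENNReal NNReal

section Helpers
variable {Ω : Type*} [MeasurableSpace Ω] {μ : MeasureTheory.Measure Ω} [IsProbabilityMeasure μ]

lemma memLp_all_mul' {f g : Ω → ℝ}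
    (hf : ∀ n : ℕ, MemLp f n μ) (hg : ∀ n : ℕ, MemLp g n μ) (n : ℕ) :
    MemLp (fun ω => f ω * g ω) n μ := by
  have hpqr : (1 : ℝ≥0∞) / (n : ℝ≥0∞) =
      1 / ((2 * n : ℕ) : ℝ≥0∞) + 1 / ((2 * n : ℕ) : ℝ≥0∞) := by
    rw [ENNReal.div_add_div_same]
    have h1 : ((2 * n : ℕ) : ℝ≥0∞) = 2 * (n : ℝ≥0∞) := by push_cast; ring
    rw [h1, show (1:ℝ≥0∞) + 1 = 2 * 1 from by ring]
    exact (ENNReal.mul_div_mul_left 1 n two_ne_zero ENNReal.ofNat_ne_top).symm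
  have := (hg (2 * n)).smul (hf (2 * n)) (hpqr := ⟨by simpa only [one_div] using hpqr.symm⟩)
  exact this

lemma memLp_all_pow' {f : Ω → ℝ} (hf : ∀ n : ℕ, MemLp f n μ) (k : ℕ) :
    ∀ n : ℕ, MemLp (fun ω => f ω ^ k) n μ := by
  induction k with
  | zero => intro n; simpa using memLp_const (1 : ℝ)
  | succ k ih =>
      intro n
      have := memLp_all_mul' (μ := μ) ih hf n
      simpa [pow_succ] using this

end Helpers

/-- Under the moment recursion for all 3 ≤ m < n,
    E[Z^{n−1}D] − (n−1)E[DZ]E[Z^{n−2}]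
      = α_z^{n−1}·α_d·(E[ε_u^n] − (n−1)E[ε_u^{n−2}]E[ε_u²]). -/
theorem cross_moment_identity_Z
    {Ω : Type*} [MeasurableSpace Ω] {μ : MeasureTheory.Measure Ω}
    [MeasureTheory.IsProbabilityMeasure μ]
    (εu εz εd εy : Ω → ℝ)
    (hmu : Measurable εu) (hmz : Measurable εz) (hmd : Measurable εd) (hmy : Measurable εy)
    (hind : ProbabilityTheory.iIndepFun ![εu, εz, εd, εy] μ)
    (h0u : ∫ ω, εu ω ∂μ = 0) (h0z : ∫ ω, εz ω ∂μ = 0)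
    (h0d : ∫ ω, εd ω ∂μ = 0) (h0y : ∫ ω, εy ω ∂μ = 0)
    (hLu : ∀ n : ℕ, MeasureTheory.MemLp εu n μ) (hLz : ∀ n : ℕ, MeasureTheory.MemLp εz n μ)
    (hLd : ∀ n : ℕ, MeasureTheory.MemLp εd n μ) (hLy : ∀ n : ℕ, MeasureTheory.MemLp εy n μ)
    (αz αd β γ : ℝ) (Z D Y : Ω → ℝ)
    (hZ : ∀ ω, Z ω = αz * εu ω + εz ω)
    (hD : ∀ ω, D ω = αd * εu ω + εd ω)
    (hY : ∀ ω, Y ω = β * D ω + γ * εu ω + εy ω)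
    (n : ℕ) (hn : 3 ≤ n)
    (hrec : ∀ m : ℕ, 3 ≤ m → m < n →
      ∫ ω, εu ω ^ m ∂μ =
        ((m : ℝ) - 1) * (∫ ω, εu ω ^ (m - 2) ∂μ) * ∫ ω, εu ω ^ 2 ∂μ) :
    (∫ ω, Z ω ^ (n - 1) * D ω ∂μ) -
      ((n : ℝ) - 1) * (∫ ω, D ω * Z ω ∂μ) * (∫ ω, Z ω ^ (n - 2) ∂μ) =
    αz ^ (n - 1) * αd *
      ((∫ ω, εu ω ^ n ∂μ) -
        ((n : ℝ) - 1) * (∫ ω, εu ω ^ (n - 2) ∂μ) * ∫ ω, εu ω ^ 2 ∂μ) := by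
    -- measurability of coordinates
  have hmv : ∀ i, Measurable (![εu, εz, εd, εy] i) := by
    intro i; fin_cases i <;> assumption
  -- independence facts
  have h01 : IndepFun εu εz μ := hind.indepFun (show (0 : Fin 4) ≠ 1 by decide)
  have h02 : IndepFun εu εd μ := hind.indepFun (show (0 : Fin 4) ≠ 2 by decide)
  have h12 : IndepFun εz εd μ := hind.indepFun (show (1 : Fin 4) ≠ 2 by decide)
  have hpair : IndepFun (fun ω => (εu ω, εz ω)) εd μ :=
    hind.indepFun_prodMk hmv 0 1 2 (by decide) (by decide)
  -- factorization of moments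
  have fac2 : ∀ p q : ℕ, ∫ ω, εu ω ^ p * εz ω ^ q ∂μ =
      (∫ ω, εu ω ^ p ∂μ) * ∫ ω, εz ω ^ q ∂μ := by
    intro p q
    exact (h01.comp (measurable_id.pow_const p) (measurable_id.pow_const q)).integral_fun_mul_eq_mul_integral
      (hmu.pow_const p).aestronglyMeasurable (hmz.pow_const q).aestronglyMeasurable
  have facud : ∀ p : ℕ, ∫ ω, εu ω ^ p * εd ω ∂μ = (∫ ω, εu ω ^ p ∂μ) * ∫ ω, εd ω ∂μ := by
    intro p
    exact (h02.comp (measurable_id.pow_const p) measurable_id).integral_fun_mul_eq_mul_integral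
      (hmu.pow_const p).aestronglyMeasurable hmd.aestronglyMeasurable
  have faczd : ∀ q : ℕ, ∫ ω, εz ω ^ q * εd ω ∂μ = (∫ ω, εz ω ^ q ∂μ) * ∫ ω, εd ω ∂μ := by
    intro q
    exact (h12.comp (measurable_id.pow_const q) measurable_id).integral_fun_mul_eq_mul_integral
      (hmz.pow_const q).aestronglyMeasurable hmd.aestronglyMeasurable
  have fac3 : ∀ p q : ℕ, ∫ ω, εu ω ^ p * εz ω ^ q * εd ω ∂μ = 0 := by
    intro p q
    have h2 : IndepFun (fun ω => εu ω ^ p * εz ω ^ q) εd μ :=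
      hpair.comp (φ := fun x : ℝ × ℝ => x.1 ^ p * x.2 ^ q) (ψ := id)
        ((measurable_fst.pow_const p).mul (measurable_snd.pow_const q)) measurable_id
    have := h2.integral_fun_mul_eq_mul_integral ((hmu.pow_const p).mul (hmz.pow_const q)).aestronglyMeasurable
      hmd.aestronglyMeasurable
    rw [h0d, mul_zero] at this
    exact this
  -- integrability facts
  have int_uz : ∀ p q : ℕ, Integrable (fun ω => εu ω ^ p * εz ω ^ q) μ := fun p q =>
    memLp_one_iff_integrable.mp (by
      simpa using memLp_all_mul' (memLp_all_pow' hLu p) (memLp_all_pow' hLz q) 1)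
  have int_uzd : ∀ p q : ℕ, Integrable (fun ω => εu ω ^ p * εz ω ^ q * εd ω) μ := fun p q =>
    memLp_one_iff_integrable.mp (by
      simpa using memLp_all_mul'
        (fun n => memLp_all_mul' (memLp_all_pow' hLu p) (memLp_all_pow' hLz q) n) hLd 1)
  have int_u : ∀ p : ℕ, Integrable (fun ω => εu ω ^ p) μ := fun p =>
    memLp_one_iff_integrable.mp (by simpa using memLp_all_pow' hLu p 1)
  have int_ud : ∀ p : ℕ, Integrable (fun ω => εu ω ^ p * εd ω) μ := fun p =>
    memLp_one_iff_integrable.mp (by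
      simpa using memLp_all_mul' (memLp_all_pow' hLu p) hLd 1)
  have int_zd : ∀ q : ℕ, Integrable (fun ω => εz ω ^ q * εd ω) μ := fun q =>
    memLp_one_iff_integrable.mp (by
      simpa using memLp_all_mul' (memLp_all_pow' hLz q) hLd 1)
  -- simple moments
  have hu0 : ∫ ω, εu ω ^ 0 ∂μ = 1 := by simp
  have hu1 : ∫ ω, εu ω ^ 1 ∂μ = 0 := by simpa using h0u
  have hz0 : ∫ ω, εz ω ^ 0 ∂μ = 1 := by simp
  have hz1 : ∫ ω, εz ω ^ 1 ∂μ = 0 := by simpa using h0z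
  -- E[DZ]
  have hDZ : ∫ ω, D ω * Z ω ∂μ = αd * αz * ∫ ω, εu ω ^ 2 ∂μ := by
    have hfun2 : (fun ω => D ω * Z ω) = fun ω =>
        (αd * αz) * (εu ω ^ 2) + (αd * (εu ω ^ 1 * εz ω ^ 1)
          + (αz * (εu ω ^ 1 * εd ω) + εz ω ^ 1 * εd ω)) :=
      funext fun ω => by rw [hD, hZ]; ring
    have I1 : Integrable (fun ω => (αd * αz) * (εu ω ^ 2)) μ := (int_u 2).const_mul _
    have I2 : Integrable (fun ω => αd * (εu ω ^ 1 * εz ω ^ 1)) μ := (int_uz 1 1).const_mul _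
    have I3 : Integrable (fun ω => αz * (εu ω ^ 1 * εd ω)) μ := (int_ud 1).const_mul _
    have I4 : Integrable (fun ω => εz ω ^ 1 * εd ω) μ := int_zd 1
    have I34 : Integrable (fun ω => αz * (εu ω ^ 1 * εd ω) + εz ω ^ 1 * εd ω) μ := I3.add I4
    have I234 : Integrable (fun ω => αd * (εu ω ^ 1 * εz ω ^ 1)
        + (αz * (εu ω ^ 1 * εd ω) + εz ω ^ 1 * εd ω)) μ := I2.add I34
    rw [hfun2, integral_add I1 I234, integral_add I2 I34,
      integral_add I3 I4, integral_const_mul, integral_const_mul, integral_const_mul,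
      fac2 1 1, facud 1, faczd 1, hu1, hz1, h0d]
    ring
  -- E[Z^m]
  have hZpow : ∀ m : ℕ, ∫ ω, Z ω ^ m ∂μ =
      ∑ k ∈ Finset.range (m + 1),
        ((m.choose k : ℝ) * αz ^ k) * ((∫ ω, εu ω ^ k ∂μ) * ∫ ω, εz ω ^ (m - k) ∂μ) := by
    intro m
    have hfun : (fun ω => Z ω ^ m) = fun ω =>
        ∑ k ∈ Finset.range (m + 1),
          ((m.choose k : ℝ) * αz ^ k) * (εu ω ^ k * εz ω ^ (m - k)) :=
      funext fun ω => by
        rw [hZ, add_pow]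
        exact Finset.sum_congr rfl fun k _ => by ring
    have intk : ∀ k ∈ Finset.range (m + 1),
        Integrable (fun ω => ((m.choose k : ℝ) * αz ^ k) * (εu ω ^ k * εz ω ^ (m - k))) μ :=
      fun k _ => (int_uz k (m - k)).const_mul _
    rw [hfun, integral_finset_sum _ intk]
    exact Finset.sum_congr rfl fun k _ => by rw [integral_const_mul, fac2]
  -- E[Z^m * D]
  have hZD : ∀ m : ℕ, ∫ ω, Z ω ^ m * D ω ∂μ =
      ∑ k ∈ Finset.range (m + 1),
        ((m.choose k : ℝ) * αz ^ k * αd) *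
          ((∫ ω, εu ω ^ (k + 1) ∂μ) * ∫ ω, εz ω ^ (m - k) ∂μ) := by
    intro m
    have hfun : (fun ω => Z ω ^ m * D ω) = fun ω =>
        ∑ k ∈ Finset.range (m + 1),
          (((m.choose k : ℝ) * αz ^ k * αd) * (εu ω ^ (k + 1) * εz ω ^ (m - k))
            + ((m.choose k : ℝ) * αz ^ k) * (εu ω ^ k * εz ω ^ (m - k) * εd ω)) :=
      funext fun ω => by
        rw [hZ, hD, add_pow, Finset.sum_mul]
        exact Finset.sum_congr rfl fun k _ => by ring
    have J1 : ∀ k : ℕ, Integrable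
        (fun ω => ((m.choose k : ℝ) * αz ^ k * αd) * (εu ω ^ (k + 1) * εz ω ^ (m - k))) μ :=
      fun k => (int_uz (k + 1) (m - k)).const_mul _
    have J2 : ∀ k : ℕ, Integrable
        (fun ω => ((m.choose k : ℝ) * αz ^ k) * (εu ω ^ k * εz ω ^ (m - k) * εd ω)) μ :=
      fun k => (int_uzd k (m - k)).const_mul _
    have intk : ∀ k ∈ Finset.range (m + 1), Integrable
        (fun ω => ((m.choose k : ℝ) * αz ^ k * αd) * (εu ω ^ (k + 1) * εz ω ^ (m - k))
          + ((m.choose k : ℝ) * αz ^ k) * (εu ω ^ k * εz ω ^ (m - k) * εd ω)) μ :=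
      fun k _ => (J1 k).add (J2 k)
    rw [hfun, integral_finset_sum _ intk]
    refine Finset.sum_congr rfl fun k _ => ?_
    rw [integral_add (J1 k) (J2 k), integral_const_mul, integral_const_mul,
      fac2, fac3, mul_zero, add_zero]
  -- final algebra
  obtain ⟨p, rfl⟩ : ∃ p, n = p + 3 := ⟨n - 3, by omega⟩
  simp only [show p + 3 - 1 = p + 2 from rfl, show p + 3 - 2 = p + 1 from rfl]
  rw [hZD (p + 2), hZpow (p + 1), hDZ]
  have hone : ∫ _ω, (1 : ℝ) ∂μ = 1 := by simp
  have hG : ∑ k ∈ Finset.range (p + 1 + 1),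
        (((p + 1).choose k : ℝ) * αz ^ k *
          ((∫ ω, εu ω ^ k ∂μ) * ∫ ω, εz ω ^ (p + 1 - k) ∂μ))
      = (∑ k ∈ Finset.range (p + 1),
          (((p + 1).choose k : ℝ) * αz ^ k *
            ((∫ ω, εu ω ^ k ∂μ) * ∫ ω, εz ω ^ (p + 1 - k) ∂μ)))
        + αz ^ (p + 1) * ∫ ω, εu ω ^ (p + 1) ∂μ := by
    rw [Finset.sum_range_succ]
    simp [Nat.choose_self, Nat.sub_self, hz0]
  rw [hG]
  have split1 : ∀ F : ℕ → ℝ, ∑ k ∈ Finset.range (p + 2 + 1), F k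
      = (∑ k ∈ Finset.range (p + 1), F (k + 1)) + F 0 + F (p + 2) := by
    intro F
    rw [Finset.sum_range_succ]
    rw [show (∑ k ∈ Finset.range (p + 2), F k)
        = (∑ k ∈ Finset.range (p + 1), F (k + 1)) + F 0 from Finset.sum_range_succ' F (p + 1)]
  rw [split1]
  simp only [show p + 2 + 1 = p + 3 from rfl, hone, Nat.choose_self, Nat.choose_zero_right, Nat.cast_one, Nat.sub_self,
    Nat.sub_zero, pow_zero, zero_add, one_mul, mul_one, hz0, hu1, mul_zero, zero_mul, add_zero]
  have hmom : ∀ k : ℕ, k < p + 1 →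
      ∫ ω, εu ω ^ (k + 2) ∂μ = ((k : ℝ) + 1) * (∫ ω, εu ω ^ k ∂μ) * ∫ ω, εu ω ^ 2 ∂μ := by
    intro k hk
    rcases Nat.eq_zero_or_pos k with rfl | hpos
    · simp [hu0]
    · have h := hrec (k + 2) (by omega) (by omega)
      rw [show k + 2 - 2 = k from rfl] at h
      rw [h]; push_cast; ring
  have hsum : ∑ k ∈ Finset.range (p + 1),
        (((p + 2).choose (k + 1) : ℝ) * αz ^ (k + 1) * αd *
          ((∫ ω, εu ω ^ (k + 1 + 1) ∂μ) * ∫ ω, εz ω ^ (p + 1 - k) ∂μ))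
      = ((p : ℝ) + 2) * (αd * αz * ∫ ω, εu ω ^ 2 ∂μ) *
        ∑ k ∈ Finset.range (p + 1),
          (((p + 1).choose k : ℝ) * αz ^ k *
            ((∫ ω, εu ω ^ k ∂μ) * ∫ ω, εz ω ^ (p + 1 - k) ∂μ)) := by
    rw [Finset.mul_sum]
    refine Finset.sum_congr rfl fun k hk => ?_
    have hk' : k < p + 1 := Finset.mem_range.mp hk
    rw [show k + 1 + 1 = k + 2 from rfl, hmom k hk']
    have hch : ((p + 2).choose (k + 1) : ℝ) * ((k : ℝ) + 1)
        = ((p : ℝ) + 2) * ((p + 1).choose k : ℝ) := by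
      have h2 := congrArg (Nat.cast : ℕ → ℝ) (Nat.add_one_mul_choose_eq (p + 1) k)
      simp only [Nat.succ_eq_add_one, show p + 1 + 1 = p + 2 from rfl] at h2
      push_cast at h2
      linear_combination -h2
    linear_combination (αz ^ (k + 1) * αd *
      ((∫ ω, εu ω ^ k ∂μ) * (∫ ω, εu ω ^ 2 ∂μ) * ∫ ω, εz ω ^ (p + 1 - k) ∂μ)) * hch
  push_cast
  linear_combination hsum
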